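/- Let G(X, Y, M) be defined by G(X, Y, M) = (1/(√π M)) ∫_X^{X+Y} ∫_{-∞}^{∞} (e^{-((t-T)/M)²} + e^{-((t+T)/M)²}) · t · tanh(π t) dt dT · (1/π). Then G(X, Y, M) = (2XY + Y²)/π + O(MY) as X → ∞, uniformly for 1 ≤ M ≤ Y ≤ X. -/

import Mathlib

open MeasureTheory Real

open Set Filter

lemma gaussIoi {b : ℝ} (hb : 0 < b) :
    ∫ x in Ioi (0:ℝ), x * Real.exp (-b * x ^ 2) = 1 / (2 * b) := by
  have hderiv : ∀ x ∈ Ici (0:ℝ),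
      HasDerivAt (fun x : ℝ => -(2*b)⁻¹ * Real.exp (-b * x ^ 2))
        (x * Real.exp (-b * x ^ 2)) x := by
    intro x _
    have h1 : HasDerivAt (fun x : ℝ => -b * x ^ 2) (-b * (2 * x)) x := by
      simpa using ((hasDerivAt_pow 2 x).const_mul (-b))
    have h2 := (h1.exp).const_mul (-(2*b)⁻¹)
    refine h2.congr_deriv ?_
    have h2b : (2*b)⁻¹ * (2*b) = 1 := inv_mul_cancel₀ (by positivity)
    linear_combination (x * Real.exp (-b * x ^ 2)) * h2b
  have hint : IntegrableOn (fun x : ℝ => x * Real.exp (-b * x ^ 2)) (Ioi 0) :=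
    (integrable_mul_exp_neg_mul_sq hb).integrableOn
  have htend : Tendsto (fun x : ℝ => -(2*b)⁻¹ * Real.exp (-b * x ^ 2)) atTop (nhds 0) := by
    have : Tendsto (fun x : ℝ => -b * x ^ 2) atTop atBot := by
      apply Tendsto.const_mul_atTop_of_neg (by linarith : -b < 0)
      exact tendsto_pow_atTop (by norm_num)
    simpa using (Real.tendsto_exp_atBot.comp this).const_mul (-(2*b)⁻¹)
  have := integral_Ioi_of_hasDerivAt_of_tendsto (a := 0)
    ((by fun_prop : Continuous (fun x : ℝ => -(2*b)⁻¹ * Real.exp (-b * x ^ 2))).continuousWithinAt)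
    (fun x hx => hderiv x (mem_Ici.2 (le_of_lt hx))) hint htend
  rw [this]
  simp

lemma gaussAbs {b : ℝ} (hb : 0 < b) :
    ∫ x : ℝ, |x| * Real.exp (-b * x ^ 2) = 1 / b := by
  have := integral_comp_abs (f := fun x => x * Real.exp (-b * x ^ 2))
  simp only [sq_abs] at this
  rw [this, gaussIoi hb]
  ring


lemma tanh_eq' (y : ℝ) :
    Real.tanh y = (Real.exp y - Real.exp (-y)) / (Real.exp y + Real.exp (-y)) := by
  rw [Real.tanh_eq_sinh_div_cosh, Real.sinh_eq, Real.cosh_eq]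
  have hpos : (0:ℝ) < Real.exp y + Real.exp (-y) := by positivity
  field_simp

lemma abs_tanh_le_one (y : ℝ) : |Real.tanh y| ≤ 1 := by
  rw [tanh_eq', abs_div, abs_of_pos (by positivity : (0:ℝ) < Real.exp y + Real.exp (-y)),
    div_le_one (by positivity)]
  have h1 := Real.exp_pos y
  have h2 := Real.exp_pos (-y)
  rw [abs_sub_le_iff]
  constructor <;> linarith

lemma one_sub_tanh_le (y : ℝ) : 1 - Real.tanh y ≤ 2 * Real.exp (-(2*y)) := by
  rw [tanh_eq']
  have h1 := Real.exp_pos y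
  have h2 := Real.exp_pos (-y)
  have hprod : Real.exp (-y) * Real.exp y = 1 := by
    rw [← Real.exp_add]; simp
  have hsq : Real.exp (-(2*y)) = Real.exp (-y) * Real.exp (-y) := by
    rw [← Real.exp_add]; ring_nf
  have hpos : (0:ℝ) < Real.exp y + Real.exp (-y) := by positivity
  rw [sub_div' (ne_of_gt hpos), div_le_iff₀ hpos]
  nlinarith [hprod, hsq, h1, h2]

lemma err_bound_nonneg {t : ℝ} (ht : 0 ≤ t) : |t * Real.tanh (π * t) - t| ≤ 1 := by
  have h1 : Real.tanh (π * t) ≤ 1 := (abs_le.1 (abs_tanh_le_one _)).2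
  have h2 : t * Real.tanh (π * t) - t ≤ 0 := by nlinarith
  rw [abs_of_nonpos h2]
  have h3 : 1 - Real.tanh (π * t) ≤ 2 * Real.exp (-(2 * (π * t))) := one_sub_tanh_le _
  have h4 : Real.exp (-(2 * (π * t))) ≤ Real.exp (-(2 * t)) := by
    apply Real.exp_le_exp.2
    nlinarith [Real.pi_gt_three]
  have h5 : 2 * t ≤ Real.exp (2 * t) := by
    nlinarith [Real.add_one_le_exp (2 * t)]
  have h6 : Real.exp (-(2*t)) * Real.exp (2*t) = 1 := by rw [← Real.exp_add]; simp
  have h7 := Real.exp_pos (-(2*t))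
  nlinarith [h3, h4, h5, h6, h7, Real.exp_pos (2*t)]


lemma integrable_abs_gauss {b : ℝ} (hb : 0 < b) :
    Integrable (fun x : ℝ => |x| * Real.exp (-b * x ^ 2)) := by
  have := (integrable_mul_exp_neg_mul_sq hb).abs
  simpa [abs_mul, abs_of_pos (Real.exp_pos _)] using this

lemma integrable_gauss_mul {b T : ℝ} (hb : 0 < b) {f : ℝ → ℝ} (hf : Continuous f)
    (hbd : ∀ t, |f t| ≤ 1 + 2 * |t|) :
    Integrable (fun t : ℝ => Real.exp (-b * (t - T) ^ 2) * f t) := by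
  have hg : Integrable (fun t : ℝ => (1 + 2*|T|) * Real.exp (-b * (t - T) ^ 2)
      + 2 * (|t - T| * Real.exp (-b * (t - T) ^ 2))) := by
    apply Integrable.add
    · exact ((integrable_exp_neg_mul_sq hb).const_mul _).comp_sub_right T
    · exact ((integrable_abs_gauss hb).const_mul 2).comp_sub_right T
  refine hg.mono' ((Continuous.mul (by fun_prop) hf).aestronglyMeasurable) ?_
  filter_upwards with t
  have hE := Real.exp_pos (-b * (t - T) ^ 2)
  have h1 : |t| ≤ |t - T| + |T| := by
    calc |t| = |(t - T) + T| := by ring_nf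
    _ ≤ |t - T| + |T| := abs_add_le _ _
  have h2 := hbd t
  rw [norm_mul, Real.norm_eq_abs, Real.norm_eq_abs, abs_of_pos hE]
  nlinarith [abs_nonneg (f t), abs_nonneg t, abs_nonneg (t - T), abs_nonneg T]

lemma gauss_shift_int {b T : ℝ} (hb : 0 < b) :
    ∫ t : ℝ, Real.exp (-b * (t - T) ^ 2) = Real.sqrt (π / b) := by
  have h : (fun t : ℝ => Real.exp (-b * (t - T) ^ 2))
      = fun t : ℝ => (fun s : ℝ => Real.exp (-b * s ^ 2)) (t - T) := rfl
  rw [h, integral_sub_right_eq_self (fun s : ℝ => Real.exp (-b * s ^ 2)) T, integral_gaussian]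

lemma gauss_odd_int {b : ℝ} (hb : 0 < b) :
    ∫ s : ℝ, Real.exp (-b * s ^ 2) * s = 0 := by
  have h := MeasureTheory.integral_neg_eq_self (fun s : ℝ => Real.exp (-b * s ^ 2) * s) volume
  have h2 : (fun s : ℝ => Real.exp (-b * (-s) ^ 2) * (-s))
      = fun s : ℝ => -(Real.exp (-b * s ^ 2) * s) := by
    funext s; rw [neg_sq]; ring
  rw [h2, integral_neg] at h
  linarith

lemma gaussLin {b T : ℝ} (hb : 0 < b) :
    ∫ t : ℝ, Real.exp (-b * (t - T) ^ 2) * t = T * Real.sqrt (π / b) := by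
  have h : (fun t : ℝ => Real.exp (-b * (t - T) ^ 2) * t)
      = fun t : ℝ => (fun s : ℝ => Real.exp (-b * s ^ 2) * (s + T)) (t - T) := by
    funext t; simp [sub_add_cancel]
  rw [h, integral_sub_right_eq_self (fun s : ℝ => Real.exp (-b * s ^ 2) * (s + T)) T]
  have hint1 : Integrable (fun s : ℝ => Real.exp (-b * s ^ 2) * s) := by
    have := integrable_mul_exp_neg_mul_sq hb
    simpa [mul_comm] using this
  have hint2 : Integrable (fun s : ℝ => Real.exp (-b * s ^ 2) * T) :=
    (integrable_exp_neg_mul_sq hb).mul_const T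
  have hsplit : (fun s : ℝ => Real.exp (-b * s ^ 2) * (s + T))
      = fun s : ℝ => Real.exp (-b * s ^ 2) * s + Real.exp (-b * s ^ 2) * T := by
    funext s; ring
  rw [hsplit, integral_add hint1 hint2, gauss_odd_int hb, MeasureTheory.integral_mul_const, integral_gaussian]
  ring

lemma continuous_tanh' : Continuous Real.tanh := by
  have h : Real.tanh = fun x => Real.sinh x / Real.cosh x :=
    funext fun x => Real.tanh_eq_sinh_div_cosh x
  rw [h]
  exact Real.continuous_sinh.div Real.continuous_cosh (fun x => (Real.cosh_pos x).ne')

lemma inner_est {b T : ℝ} (hb : 0 < b) (hT : 0 ≤ T) :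
    |(∫ t : ℝ, (Real.exp (-b * (t - T) ^ 2) + Real.exp (-b * (t + T) ^ 2)) * t
        * Real.tanh (π * t)) - 2 * T * Real.sqrt (π / b)|
      ≤ 2 * Real.sqrt (π / b) + 4 / b := by
  have hbd1 : ∀ t : ℝ, |t * Real.tanh (π * t)| ≤ 1 + 2 * |t| := by
    intro t
    rw [abs_mul]
    nlinarith [abs_tanh_le_one (π * t), abs_nonneg t, abs_nonneg (Real.tanh (π * t))]
  have hbd2 : ∀ t : ℝ, |(t : ℝ)| ≤ 1 + 2 * |t| := by
    intro t; nlinarith [abs_nonneg t]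
  have hbd3 : ∀ t : ℝ, |t * Real.tanh (π * t) - t| ≤ 1 + 2 * |t| := by
    intro t
    have h1 : |t * Real.tanh (π * t)| ≤ |t| := by
      rw [abs_mul]
      nlinarith [abs_tanh_le_one (π * t), abs_nonneg t, abs_nonneg (Real.tanh (π * t))]
    calc |t * Real.tanh (π * t) - t| ≤ |t * Real.tanh (π * t)| + |t| := abs_sub _ _
    _ ≤ 1 + 2 * |t| := by nlinarith [abs_nonneg t]
  have hcont1 : Continuous (fun t : ℝ => t * Real.tanh (π * t)) :=
    continuous_id.mul (continuous_tanh'.comp (continuous_const.mul continuous_id))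
  have intA : Integrable (fun t : ℝ => Real.exp (-b * (t - T) ^ 2) * (t * Real.tanh (π * t))) :=
    integrable_gauss_mul hb hcont1 hbd1
  have intA' : Integrable (fun t : ℝ => Real.exp (-b * (t + T) ^ 2) * (t * Real.tanh (π * t))) := by
    have := integrable_gauss_mul (T := -T) hb hcont1 hbd1
    simpa [sub_neg_eq_add] using this
  -- split into two integrals
  have hsplit : (fun t : ℝ => (Real.exp (-b * (t - T) ^ 2) + Real.exp (-b * (t + T) ^ 2)) * t
      * Real.tanh (π * t))
      = fun t : ℝ => Real.exp (-b * (t - T) ^ 2) * (t * Real.tanh (π * t))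
        + Real.exp (-b * (t + T) ^ 2) * (t * Real.tanh (π * t)) := by
    funext t; ring
  rw [hsplit, integral_add intA intA']
  -- symmetry: the second equals the first
  have hsym : ∫ t : ℝ, Real.exp (-b * (t + T) ^ 2) * (t * Real.tanh (π * t))
      = ∫ t : ℝ, Real.exp (-b * (t - T) ^ 2) * (t * Real.tanh (π * t)) := by
    have h := MeasureTheory.integral_neg_eq_self
      (fun t : ℝ => Real.exp (-b * (t - T) ^ 2) * (t * Real.tanh (π * t))) volume
    have h2 : (fun t : ℝ => Real.exp (-b * (-t - T) ^ 2) * ((-t) * Real.tanh (π * -t)))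
        = fun t : ℝ => Real.exp (-b * (t + T) ^ 2) * (t * Real.tanh (π * t)) := by
      funext t
      rw [show (-t - T) ^ 2 = (t + T) ^ 2 by ring, mul_neg, Real.tanh_neg]
      ring
    rw [h2] at h
    exact h
  rw [hsym]
  -- now study A := ∫ exp(-b(t-T)^2) * (t * tanh(π t))
  have intLin : Integrable (fun t : ℝ => Real.exp (-b * (t - T) ^ 2) * t) :=
    integrable_gauss_mul hb continuous_id hbd2
  have intErr : Integrable (fun t : ℝ =>
      Real.exp (-b * (t - T) ^ 2) * (t * Real.tanh (π * t) - t)) :=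
    integrable_gauss_mul hb (hcont1.sub continuous_id) hbd3
  have hA : (fun t : ℝ => Real.exp (-b * (t - T) ^ 2) * (t * Real.tanh (π * t)))
      = fun t : ℝ => Real.exp (-b * (t - T) ^ 2) * t
        + Real.exp (-b * (t - T) ^ 2) * (t * Real.tanh (π * t) - t) := by
    funext t; ring
  rw [hA, integral_add intLin intErr, gaussLin hb]
  -- bound the error integral
  set R := ∫ t : ℝ, Real.exp (-b * (t - T) ^ 2) * (t * Real.tanh (π * t) - t) with hR
  have hRbound : |R| ≤ Real.sqrt (π / b) + 2 / b := by
    have hle := MeasureTheory.norm_integral_le_integral_norm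
      (μ := volume) (fun t : ℝ => Real.exp (-b * (t - T) ^ 2) * (t * Real.tanh (π * t) - t))
    simp only [Real.norm_eq_abs] at hle
    have intBnd : Integrable (fun t : ℝ =>
        Real.exp (-b * (t - T) ^ 2) + 2 * (|t| * Real.exp (-b * t ^ 2))) := by
      apply Integrable.add
      · exact (integrable_exp_neg_mul_sq hb).comp_sub_right T
      · exact (integrable_abs_gauss hb).const_mul 2
    have hpt : ∀ t : ℝ, |Real.exp (-b * (t - T) ^ 2) * (t * Real.tanh (π * t) - t)|
        ≤ Real.exp (-b * (t - T) ^ 2) + 2 * (|t| * Real.exp (-b * t ^ 2)) := by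
      intro t
      rw [abs_mul, abs_of_pos (Real.exp_pos _)]
      rcases le_or_gt 0 t with ht0 | ht0
      · have h1 := err_bound_nonneg ht0
        have h2 : (0:ℝ) ≤ 2 * (|t| * Real.exp (-b * t ^ 2)) := by positivity
        nlinarith [Real.exp_pos (-b * (t - T) ^ 2)]
      · have h1 : |t * Real.tanh (π * t) - t| ≤ 2 * |t| := by
          calc |t * Real.tanh (π * t) - t| ≤ |t * Real.tanh (π * t)| + |t| := abs_sub _ _
          _ ≤ 2 * |t| := by
            rw [abs_mul]
            nlinarith [abs_tanh_le_one (π * t), abs_nonneg t]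
        have h2 : Real.exp (-b * (t - T) ^ 2) ≤ Real.exp (-b * t ^ 2) := by
          apply Real.exp_le_exp.2
          nlinarith [mul_nonneg hb.le (mul_nonneg hT (show (0:ℝ) ≤ T - 2*t by linarith))]
        have h3 := Real.exp_pos (-b * (t - T) ^ 2)
        have h4 := Real.exp_pos (-b * t ^ 2)
        nlinarith [abs_nonneg (t * Real.tanh (π * t) - t), abs_nonneg t]
    have hmono : ∫ t : ℝ, |Real.exp (-b * (t - T) ^ 2) * (t * Real.tanh (π * t) - t)|
        ≤ ∫ t : ℝ, (Real.exp (-b * (t - T) ^ 2) + 2 * (|t| * Real.exp (-b * t ^ 2))) :=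
      integral_mono intErr.abs intBnd hpt
    have hval : ∫ t : ℝ, (Real.exp (-b * (t - T) ^ 2) + 2 * (|t| * Real.exp (-b * t ^ 2)))
        = Real.sqrt (π / b) + 2 / b := by
      rw [integral_add ((integrable_exp_neg_mul_sq hb).comp_sub_right T)
        ((integrable_abs_gauss hb).const_mul 2), gauss_shift_int hb, MeasureTheory.integral_const_mul,
        gaussAbs hb]
      ring
    calc |R| ≤ _ := hle
    _ ≤ _ := hmono
    _ = _ := hval
  have habs : |T * Real.sqrt (π / b) + R + (T * Real.sqrt (π / b) + R)
      - 2 * T * Real.sqrt (π / b)| = |2 * R| := by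
    congr 1; ring
  rw [habs, abs_mul, abs_of_pos (by norm_num : (0:ℝ) < 2)]
  calc 2 * |R| ≤ 2 * (Real.sqrt (π / b) + 2 / b) := by linarith [hRbound]
  _ = 2 * Real.sqrt (π / b) + 4 / b := by ring


set_option maxHeartbeats 1000000

/-- The diagonal term of the Kuznetsov formula:
`G(X,Y,M) = (2XY + Y²)/π + O(MY)` uniformly for `1 ≤ M ≤ Y ≤ X`, `X` large. -/
theorem diagonal_term_asymptotic :
    ∃ C > (0 : ℝ), ∃ X₀ : ℝ, ∀ X Y M : ℝ, X₀ ≤ X → 1 ≤ M → M ≤ Y → Y ≤ X →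
      |(1 / Real.pi) * ((1 / (Real.sqrt Real.pi * M)) *
          ∫ T in X..(X + Y),
            ∫ t : ℝ,
              (Real.exp (-((t - T) / M) ^ 2) + Real.exp (-((t + T) / M) ^ 2)) *
                t * Real.tanh (Real.pi * t)) -
        (2 * X * Y + Y ^ 2) / Real.pi| ≤ C * M * Y := by
  refine ⟨8, by norm_num, 1, ?_⟩
  intro X Y M hX hM hMY hYX
  have hM0 : (0:ℝ) < M := lt_of_lt_of_le one_pos hM
  have hX0 : (0:ℝ) < X := lt_of_lt_of_le one_pos hX
  have hY0 : (0:ℝ) < Y := lt_of_lt_of_le (lt_of_lt_of_le one_pos hM) hMY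
  set b : ℝ := (M ^ 2)⁻¹ with hbdef
  have hb : 0 < b := by positivity
  have hsqrtpi2 : Real.sqrt π ≤ 2 := by
    nlinarith [Real.sq_sqrt Real.pi_pos.le, Real.sqrt_nonneg π, Real.pi_le_four]
  have hsqrtpi1 : (1:ℝ) ≤ Real.sqrt π := by
    nlinarith [Real.sq_sqrt Real.pi_pos.le, Real.sqrt_nonneg π, Real.pi_gt_three]
  have hsqrt : Real.sqrt (π / b) = Real.sqrt π * M := by
    rw [hbdef, div_eq_mul_inv, inv_inv, Real.sqrt_mul Real.pi_pos.le, Real.sqrt_sq hM0.le]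
  have h4b : 4 / b = 4 * M ^ 2 := by rw [hbdef]; field_simp
  have harg : ∀ u : ℝ, -(u / M) ^ 2 = -b * u ^ 2 := by
    intro u; rw [hbdef]; field_simp
  set F : ℝ → ℝ := fun T => ∫ t : ℝ,
    (Real.exp (-((t - T) / M) ^ 2) + Real.exp (-((t + T) / M) ^ 2)) *
      t * Real.tanh (π * t) with hFdef
  have hFest : ∀ T : ℝ, 0 ≤ T → |F T - 2 * T * (Real.sqrt π * M)| ≤ 8 * M ^ 2 := by
    intro T hT
    have h2 : F T = ∫ t : ℝ,
        (Real.exp (-b * (t - T) ^ 2) + Real.exp (-b * (t + T) ^ 2)) * t * Real.tanh (π * t) := by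
      rw [hFdef]
      apply MeasureTheory.integral_congr_ae
      filter_upwards with t
      rw [harg (t - T), harg (t + T)]
    have h1 := inner_est hb hT
    rw [hsqrt, h4b] at h1
    rw [h2]
    calc |(∫ t : ℝ, (Real.exp (-b * (t - T) ^ 2) + Real.exp (-b * (t + T) ^ 2)) * t
        * Real.tanh (π * t)) - 2 * T * (Real.sqrt π * M)| ≤ 2 * (Real.sqrt π * M) + 4 * M ^ 2 := h1
    _ ≤ 8 * M ^ 2 := by nlinarith [hM0.le, hM]
  -- measurability of F
  have hqcont : Continuous (fun p : ℝ × ℝ =>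
      (Real.exp (-((p.2 - p.1) / M) ^ 2) + Real.exp (-((p.2 + p.1) / M) ^ 2)) *
        p.2 * Real.tanh (π * p.2)) := by
    have h1 : Continuous (fun p : ℝ × ℝ =>
        Real.exp (-((p.2 - p.1) / M) ^ 2) + Real.exp (-((p.2 + p.1) / M) ^ 2)) := by fun_prop
    exact (h1.mul continuous_snd).mul
      (continuous_tanh'.comp (continuous_const.mul continuous_snd))
  have hFmeas : StronglyMeasurable F :=
    hqcont.stronglyMeasurable.integral_prod_right'
  -- interval integrability of F
  have hℓcont : Continuous (fun T : ℝ => 2 * T * (Real.sqrt π * M)) := by fun_prop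
  have hℓint : IntervalIntegrable (fun T : ℝ => 2 * T * (Real.sqrt π * M)) volume X (X + Y) :=
    hℓcont.intervalIntegrable _ _
  have hXle : X ≤ X + Y := by linarith
  have hFint : IntervalIntegrable F volume X (X + Y) := by
    rw [intervalIntegrable_iff]
    refine Integrable.mono'
      (g := fun _ : ℝ => 8 * M ^ 2 + 2 * (X + Y) * (Real.sqrt π * M))
      (integrableOn_const ?_) hFmeas.aestronglyMeasurable.restrict ?_
    · rw [Set.uIoc_of_le hXle]; exact measure_Ioc_lt_top.ne
    · filter_upwards [ae_restrict_mem measurableSet_uIoc] with T hT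
      rw [Set.uIoc_of_le hXle] at hT
      have hT0 : (0:ℝ) ≤ T := le_of_lt (lt_of_le_of_lt hX0.le hT.1)
      have h1 := hFest T hT0
      have h2 : |F T| ≤ 8 * M ^ 2 + 2 * T * (Real.sqrt π * M) := by
        have := abs_sub_abs_le_abs_sub (F T) (2 * T * (Real.sqrt π * M))
        have h3 : |2 * T * (Real.sqrt π * M)| = 2 * T * (Real.sqrt π * M) := by
          apply abs_of_nonneg; positivity
        linarith [abs_sub_abs_le_abs_sub (F T) (2 * T * (Real.sqrt π * M)), h1, h3.le, h3.ge]
      rw [Real.norm_eq_abs]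
      have hTle : T ≤ X + Y := hT.2
      have hs : (0:ℝ) ≤ Real.sqrt π * M := by positivity
      nlinarith [h2, mul_le_mul_of_nonneg_right (by linarith : 2 * T ≤ 2 * (X + Y)) hs,
        abs_nonneg (F T)]
  -- value of the linear integral
  have hℓval : ∫ T in X..(X + Y), 2 * T * (Real.sqrt π * M)
      = Real.sqrt π * M * (2 * X * Y + Y ^ 2) := by
    have h1 : (fun T : ℝ => 2 * T * (Real.sqrt π * M))
        = fun T : ℝ => (2 * (Real.sqrt π * M)) * T := by funext T; ring
    rw [h1, intervalIntegral.integral_const_mul, integral_id]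
    ring
  -- error bound
  set E : ℝ := ∫ T in X..(X + Y), (F T - 2 * T * (Real.sqrt π * M)) with hEdef
  have hEbound : |E| ≤ 8 * M ^ 2 * Y := by
    have h1 : ∀ T ∈ Set.uIoc X (X + Y),
        ‖F T - 2 * T * (Real.sqrt π * M)‖ ≤ 8 * M ^ 2 := by
      intro T hT
      rw [Set.uIoc_of_le hXle] at hT
      exact hFest T (le_of_lt (lt_of_le_of_lt hX0.le hT.1))
    have := intervalIntegral.norm_integral_le_of_norm_le_const h1
    rw [show X + Y - X = Y by ring, abs_of_pos hY0] at this
    simpa [Real.norm_eq_abs] using this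
  have hIF : ∫ T in X..(X + Y), F T = E + Real.sqrt π * M * (2 * X * Y + Y ^ 2) := by
    rw [hEdef, intervalIntegral.integral_sub hFint hℓint, hℓval]
    ring
  have hπ0 : (0:ℝ) < π := Real.pi_pos
  have hs0 : (0:ℝ) < Real.sqrt π := lt_of_lt_of_le one_pos hsqrtpi1
  have hgoal : (1 / π) * ((1 / (Real.sqrt π * M)) * ∫ T in X..(X + Y), F T)
      - (2 * X * Y + Y ^ 2) / π = E / (π * (Real.sqrt π * M)) := by
    rw [hIF]
    field_simp
    ring
  rw [hgoal, abs_div, abs_of_pos (by positivity : (0:ℝ) < π * (Real.sqrt π * M)),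
    div_le_iff₀ (by positivity : (0:ℝ) < π * (Real.sqrt π * M))]
  have hpi3 : (3:ℝ) < π := Real.pi_gt_three
  have h1 : (1:ℝ) ≤ π * Real.sqrt π := by nlinarith
  have h2 : 8 * M ^ 2 * Y ≤ 8 * M ^ 2 * Y * (π * Real.sqrt π) := by
    nlinarith [mul_le_mul_of_nonneg_left h1 (show (0:ℝ) ≤ 8 * M ^ 2 * Y by positivity)]
  nlinarith [hEbound, h2]
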